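/- Let k be a positive integer, ε ∈ (0,1), and let y₁, …, y_k be independent centered Gaussian random variables with variances σ₁², …, σ_k² satisfying σ_i² ≥ 1/2 for all i. Then Pr[ Σ_{i=1}^k y_i² ≤ ε² ] ≤ (3ε)^k. -/

import Mathlib

open MeasureTheory ProbabilityTheory
open scoped NNReal

lemma gaussian_interval_bound {v : ℝ≥0} (hv : (1 / 2 : ℝ≥0) ≤ v) (ε : ℝ) (hε0 : 0 < ε) :
    gaussianReal 0 v (Set.Icc (-ε) ε) ≤ ENNReal.ofReal (3 * ε) := by
  have hvne : v ≠ 0 := by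
    intro h; rw [h] at hv; simp at hv
  rw [gaussianReal_apply _ hvne]
  have hpdf : ∀ x : ℝ, gaussianPDF 0 v x ≤ 1 := by
    intro x
    rw [gaussianPDF]
    refine ENNReal.ofReal_le_of_le_toReal ?_
    simp only [ENNReal.toReal_one]
    rw [gaussianPDFReal]
    have h1 : (1 : ℝ) ≤ Real.sqrt (2 * Real.pi * v) := by
      rw [show (1:ℝ) = Real.sqrt 1 by simp]
      apply Real.sqrt_le_sqrt
      have : (1/2 : ℝ) ≤ (v : ℝ) := by exact_mod_cast hv
      nlinarith [Real.pi_gt_three]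
    have h2 : Real.exp (-(x - 0) ^ 2 / (2 * v)) ≤ 1 := by
      rw [Real.exp_le_one_iff]
      have : (0:ℝ) < (v:ℝ) := by positivity
      apply div_nonpos_of_nonpos_of_nonneg <;> nlinarith [sq_nonneg (x - 0)]
    have h3 : (Real.sqrt (2 * Real.pi * v))⁻¹ ≤ 1 := by
      rw [inv_le_one_iff₀]; right; exact h1
    calc (Real.sqrt (2 * Real.pi * ↑v))⁻¹ * Real.exp (-(x - 0) ^ 2 / (2 * ↑v))
        ≤ 1 * 1 := by
          apply mul_le_mul h3 h2 (Real.exp_nonneg _) one_pos.le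
      _ = 1 := by ring
  calc ∫⁻ x in Set.Icc (-ε) ε, gaussianPDF 0 v x
      ≤ ∫⁻ _ in Set.Icc (-ε) ε, 1 := setLIntegral_mono measurable_const (fun x _ => hpdf x)
    _ = volume (Set.Icc (-ε) ε) := by simp
    _ = ENNReal.ofReal (2 * ε) := by
        rw [Real.volume_Icc]; ring_nf
    _ ≤ ENNReal.ofReal (3 * ε) := by
        apply ENNReal.ofReal_le_ofReal; linarith

/-- Let `ε ∈ (0,1)` and let `y₁,…,y_k` be independent centered Gaussians with
variances `σᵢ² ≥ 1/2`.  Then `Pr[∑ yᵢ² ≤ ε²] ≤ (3ε)^k`. -/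
theorem gaussian_shrinkage_bound {Ω : Type*} [MeasurableSpace Ω] (μ : Measure Ω)
    [IsProbabilityMeasure μ] (k : ℕ) (hk : 0 < k) (ε : ℝ) (hε0 : 0 < ε) (hε1 : ε < 1)
    (v : Fin k → ℝ≥0) (hv : ∀ i, (1 / 2 : ℝ≥0) ≤ v i)
    (y : Fin k → Ω → ℝ) (hymeas : ∀ i, Measurable (y i))
    (hylaw : ∀ i, μ.map (y i) = gaussianReal 0 (v i))
    (hyindep : iIndepFun y μ) :
    μ {ω | ∑ i, y i ω ^ 2 ≤ ε ^ 2} ≤ ENNReal.ofReal ((3 * ε) ^ k) := by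
  have hsub : {ω | ∑ i, y i ω ^ 2 ≤ ε ^ 2} ⊆ ⋂ i, y i ⁻¹' Set.Icc (-ε) ε := by
    intro ω hω
    simp only [Set.mem_setOf_eq] at hω
    simp only [Set.mem_iInter, Set.mem_preimage, Set.mem_Icc]
    intro i
    have h1 : y i ω ^ 2 ≤ ε ^ 2 := by
      refine le_trans ?_ hω
      exact Finset.single_le_sum (fun j _ => sq_nonneg (y j ω)) (Finset.mem_univ i)
    exact abs_le_of_sq_le_sq' h1 hε0.le
  refine le_trans (measure_mono hsub) ?_
  have heq : μ (⋂ i, y i ⁻¹' Set.Icc (-ε) ε) = ∏ i, μ (y i ⁻¹' Set.Icc (-ε) ε) :=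
    hyindep.meas_iInter (fun i => ⟨Set.Icc (-ε) ε, measurableSet_Icc, rfl⟩)
  rw [heq]
  have hbd : ∀ i, μ (y i ⁻¹' Set.Icc (-ε) ε) ≤ ENNReal.ofReal (3 * ε) := by
    intro i
    rw [← Measure.map_apply (hymeas i) measurableSet_Icc, hylaw i]
    exact gaussian_interval_bound (hv i) ε hε0
  calc ∏ i, μ (y i ⁻¹' Set.Icc (-ε) ε)
      ≤ ∏ _i : Fin k, ENNReal.ofReal (3 * ε) := Finset.prod_le_prod' (fun i _ => hbd i)
    _ = ENNReal.ofReal (3 * ε) ^ k := by simp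
    _ = ENNReal.ofReal ((3 * ε) ^ k) := by
        rw [ENNReal.ofReal_pow]; positivity
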